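/- Let N be a finite set of n agents, A a finite set of m alternatives, k ≥ 1, λ_ℓ = m^{ℓ/(k+1)}, and v : N → A → ℝ≥0 with v_i* := max_j v i j. Define ṽ as the simulated profile (ṽ i j = v_i*/λ_ℓ when v i j ∈ [v_i*/λ_ℓ, v_i*/λ_{ℓ-1}) for ℓ ∈ [k], ṽ i (argmax) = v_i*, and ṽ i j = 0 when v i j < v_i*/λ_k). Let z maximize ∑_i ṽ i j over j ∈ A, and let x maximize ∑_i v i j. Then ∑_i v i x ≤ (λ_1 + m/λ_k) · ∑_i v i z, i.e., the distortion of k-ARV is at most 2 · m^{1/(k+1)}. -/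

import Mathlib

/-- Theorem 4.1: the distortion of the k-ARV mechanism is at most
λ₁ + m/λ_k = 2 m^{1/(k+1)}. -/
theorem arv_distortion_upper
    (N A : Type*) [Fintype N] [Fintype A] (m k : ℕ)
    (hm : 1 ≤ m) (hA : Fintype.card A = m) (hk : 1 ≤ k)
    (lam : ℕ → ℝ) (hlam : ∀ ℓ : ℕ, lam ℓ = (m : ℝ) ^ ((ℓ : ℝ) / ((k : ℝ) + 1)))
    (v tv : N → A → ℝ) (hv : ∀ i j, 0 ≤ v i j)
    (top : N → A) (htop : ∀ i j, v i j ≤ v i (top i))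
    (htv1 : ∀ i, tv i (top i) = v i (top i))
    (htv2 : ∀ i j ℓ, j ≠ top i → ℓ ∈ Finset.Icc 1 k →
      v i (top i) / lam ℓ ≤ v i j →
      (∀ ℓ' ∈ Finset.Icc 1 k, ℓ' < ℓ → v i j < v i (top i) / lam ℓ') →
      tv i j = v i (top i) / lam ℓ)
    (htv3 : ∀ i j, v i j < v i (top i) / lam k → tv i j = 0)
    (z : A) (hz : ∀ j, (∑ i, tv i j) ≤ ∑ i, tv i z)
    (x : A) (hx : ∀ j, (∑ i, v i j) ≤ ∑ i, v i x) :
    (∑ i, v i x) ≤ (lam 1 + (m : ℝ) / lam k) * ∑ i, v i z := by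
  classical
  have hm0 : (0:ℝ) < m := by exact_mod_cast Nat.lt_of_lt_of_le Nat.zero_lt_one hm
  have hlampos : ∀ ℓ, 0 < lam ℓ := fun ℓ => by
    rw [hlam]; exact Real.rpow_pos_of_pos hm0 _
  have hlam1 : 1 ≤ lam 1 := by
    rw [hlam]
    apply Real.one_le_rpow (by exact_mod_cast hm)
    positivity
  have hmul : ∀ ℓ : ℕ, 1 ≤ ℓ → lam (ℓ-1) * lam 1 = lam ℓ := by
    intro ℓ hℓ
    rw [hlam, hlam, hlam, ← Real.rpow_add hm0]
    congr 1
    rw [Nat.cast_sub hℓ]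
    push_cast
    field_simp
    ring
  -- key pointwise estimates
  have key : ∀ i j, tv i j ≤ v i j ∧ 0 ≤ tv i j ∧
      v i j ≤ lam 1 * tv i j + v i (top i) / lam k := by
    intro i j
    have hvt : 0 ≤ v i (top i) := hv i (top i)
    have hdk : 0 ≤ v i (top i) / lam k := div_nonneg hvt (hlampos k).le
    by_cases hj : j = top i
    · subst hj
      rw [htv1]
      refine ⟨le_rfl, hvt, ?_⟩
      nlinarith
    · by_cases hlow : v i j < v i (top i) / lam k
      · rw [htv3 i j hlow]
        exact ⟨hv i j, le_rfl, by linarith⟩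
      · push_neg at hlow
        set S := (Finset.Icc 1 k).filter (fun ℓ => v i (top i) / lam ℓ ≤ v i j) with hS
        have hSne : S.Nonempty := by
          refine ⟨k, ?_⟩
          simp only [hS, Finset.mem_filter, Finset.mem_Icc]
          exact ⟨⟨hk, le_rfl⟩, hlow⟩
        set ℓ := S.min' hSne with hℓdef
        have hℓS : ℓ ∈ S := Finset.min'_mem _ _
        simp only [hS, Finset.mem_filter, Finset.mem_Icc] at hℓS
        obtain ⟨⟨hℓ1, hℓk⟩, hℓle⟩ := hℓS
        have hmin : ∀ ℓ' ∈ Finset.Icc 1 k, ℓ' < ℓ → v i j < v i (top i) / lam ℓ' := by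
          intro ℓ' hℓ' hlt
          by_contra hcon
          push_neg at hcon
          have : ℓ' ∈ S := by
            simp only [hS, Finset.mem_filter]
            exact ⟨hℓ', hcon⟩
          exact absurd (Finset.min'_le _ _ this) (not_le.mpr hlt)
        have htv := htv2 i j ℓ hj (Finset.mem_Icc.mpr ⟨hℓ1, hℓk⟩) hℓle hmin
        rw [htv]
        have hpos : 0 ≤ v i (top i) / lam ℓ := div_nonneg hvt (hlampos ℓ).le
        refine ⟨hℓle, hpos, ?_⟩
        rcases eq_or_lt_of_le hℓ1 with h1 | h2
        · -- ℓ = 1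
          have : lam 1 * (v i (top i) / lam ℓ) = v i (top i) := by
            rw [← h1]
            field_simp
          rw [this]
          linarith [htop i j]
        · -- ℓ ≥ 2
          have hℓ1' : 1 ≤ ℓ - 1 := by omega
          have hℓk' : ℓ - 1 ≤ k := by omega
          have hlt' : ℓ - 1 < ℓ := by omega
          have hb := hmin (ℓ-1) (Finset.mem_Icc.mpr ⟨hℓ1', hℓk'⟩) hlt'
          have heq : v i (top i) / lam (ℓ-1) = lam 1 * (v i (top i) / lam ℓ) := by
            rw [← hmul ℓ (by omega)]
            have h1 := (hlampos (ℓ-1)).ne'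
            have h2 := (hlampos 1).ne'
            field_simp
          rw [heq] at hb
          linarith
  have htvnn : ∀ i j, 0 ≤ tv i j := fun i j => (key i j).2.1
  have htvle : ∀ i j, tv i j ≤ v i j := fun i j => (key i j).1
  have hkpos := hlampos k
  have h1 : ∑ i, v i x ≤ lam 1 * (∑ i, tv i x) + (∑ i, v i (top i)) / lam k := by
    calc ∑ i, v i x ≤ ∑ i, (lam 1 * tv i x + v i (top i) / lam k) :=
          Finset.sum_le_sum (fun i _ => (key i x).2.2)
      _ = lam 1 * (∑ i, tv i x) + (∑ i, v i (top i)) / lam k := by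
          rw [Finset.sum_add_distrib, Finset.mul_sum, Finset.sum_div]
  have h3 : (∑ i, v i (top i)) ≤ (m : ℝ) * ∑ i, tv i z := by
    calc (∑ i, v i (top i)) = ∑ i, tv i (top i) := by
          exact Finset.sum_congr rfl (fun i _ => (htv1 i).symm)
      _ ≤ ∑ i, ∑ j, tv i j :=
          Finset.sum_le_sum (fun i _ =>
            Finset.single_le_sum (fun j _ => htvnn i j) (Finset.mem_univ _))
      _ = ∑ j, ∑ i, tv i j := Finset.sum_comm
      _ ≤ ∑ _j : A, ∑ i, tv i z := Finset.sum_le_sum (fun j _ => hz j)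
      _ = (m : ℝ) * ∑ i, tv i z := by
          rw [Finset.sum_const, Finset.card_univ, hA, nsmul_eq_mul]
  have h4 : ∑ i, tv i z ≤ ∑ i, v i z := Finset.sum_le_sum (fun i _ => htvle i z)
  have h2 : ∑ i, tv i x ≤ ∑ i, tv i z := hz x
  calc ∑ i, v i x ≤ lam 1 * (∑ i, tv i x) + (∑ i, v i (top i)) / lam k := h1
    _ ≤ lam 1 * (∑ i, tv i z) + ((m : ℝ) * ∑ i, tv i z) / lam k := by
        gcongr
    _ = lam 1 * (∑ i, tv i z) + ((m : ℝ) / lam k) * ∑ i, tv i z := by ring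
    _ ≤ lam 1 * (∑ i, v i z) + ((m : ℝ) / lam k) * ∑ i, v i z := by
        gcongr
    _ = (lam 1 + (m : ℝ) / lam k) * ∑ i, v i z := by ring
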